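/- For every integer n ≥ 1 and every s ∈ (-1,1), ∫_{-1}^{1} log|s-t| (1-t²)^{-1/2} T_n(t) dt = -(π/n) T_n(s). -/

import Mathlib

open Real MeasureTheory intervalIntegral Set Filter Topology

noncomputable def lkcg (θ : ℝ) : ℝ := Real.log (2 - 2 * Real.cos θ)


lemma lkc_log_int : IntervalIntegrable Real.log volume 0 1 := by
  have h : IntervalIntegrable (fun x : ℝ => -Real.log x) volume 0 1 := by
    apply intervalIntegrable_deriv_of_nonneg (g := fun x => x - x * Real.log x)
    · exact (continuous_id.sub Real.continuous_mul_log).continuousOn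
    · intro x hx
      simp only [min_eq_left zero_le_one, max_eq_right zero_le_one] at hx
      have h1 : HasDerivAt (fun x : ℝ => x * Real.log x) (Real.log x + 1) x := by
        have := (hasDerivAt_id x).mul (Real.hasDerivAt_log (ne_of_gt hx.1))
        refine this.congr_deriv ?_
        simp [mul_inv_cancel₀ (ne_of_gt hx.1), add_comm]
      exact ((hasDerivAt_id' x).sub h1).congr_deriv (by ring)
    · intro x hx
      simp only [min_eq_left zero_le_one, max_eq_right zero_le_one] at hx
      have := Real.log_nonpos hx.1.le hx.2.le
      linarith
  have := h.neg
  refine this.congr ?_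
  intro x _; simp

lemma lkcg_even (θ : ℝ) : lkcg (-θ) = lkcg θ := by simp [lkcg]

lemma lkcg_periodic : Function.Periodic lkcg (2 * π) := by
  intro θ; simp [lkcg, Real.cos_add_two_pi]

lemma lkcg_meas : Measurable lkcg :=
  Real.measurable_log.comp (by fun_prop)

lemma lkcg_bound {θ : ℝ} (h0 : 0 < θ) (h1 : θ ≤ π) :
    |lkcg θ| ≤ 2 * |Real.log θ| + 2 * Real.log 2 := by
  have hπ := Real.pi_pos
  have hub : 2 - 2 * Real.cos θ ≤ θ ^ 2 := by
    have := Real.one_sub_sq_div_two_le_cos (x := θ); linarith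
  have hlb : (2 * θ / π) ^ 2 ≤ 2 - 2 * Real.cos θ := by
    have := Real.cos_le_one_sub_mul_cos_sq (x := θ) (by rw [abs_of_pos h0]; exact h1)
    have e : (2 * θ / π) ^ 2 = 2 * (2 / π ^ 2 * θ ^ 2) := by
      field_simp
    rw [e]; linarith
  have hApos : (0:ℝ) < 2 - 2 * Real.cos θ := lt_of_lt_of_le (by positivity) hlb
  have hlog_ub : Real.log (2 - 2 * Real.cos θ) ≤ 2 * Real.log θ := by
    calc Real.log (2 - 2 * Real.cos θ) ≤ Real.log (θ ^ 2) := Real.log_le_log hApos hub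
    _ = 2 * Real.log θ := by rw [Real.log_pow]; push_cast; ring
  have hlog_lb : 2 * Real.log θ - 2 * Real.log 2 ≤ Real.log (2 - 2 * Real.cos θ) := by
    have h1' : Real.log ((2 * θ / π) ^ 2) ≤ Real.log (2 - 2 * Real.cos θ) :=
      Real.log_le_log (by positivity) hlb
    have h2' : Real.log ((2 * θ / π) ^ 2) = 2 * (Real.log 2 + Real.log θ - Real.log π) := by
      rw [Real.log_pow, Real.log_div (by positivity) (ne_of_gt hπ),
        Real.log_mul (by norm_num) (ne_of_gt h0)]
      push_cast; ring
    have h3' : Real.log π ≤ 2 * Real.log 2 := by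
      have : Real.log π ≤ Real.log 4 := Real.log_le_log hπ
        (by linarith [Real.pi_le_four])
      calc Real.log π ≤ Real.log 4 := this
      _ = 2 * Real.log 2 := by
        rw [show (4:ℝ) = 2 ^ 2 by norm_num, Real.log_pow]; push_cast; ring
    linarith
  rw [abs_le]
  constructor
  · have := abs_nonneg (Real.log θ)
    have := neg_abs_le (Real.log θ)
    unfold lkcg; linarith
  · have := le_abs_self (Real.log θ)
    have h2pos : (0:ℝ) ≤ Real.log 2 := Real.log_nonneg (by norm_num)
    unfold lkcg; linarith

lemma lkc_trig (n : ℕ) (hn : 1 ≤ n) (θ : ℝ) :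
    Real.sin θ * Real.sin (n*θ) = (1 - Real.cos θ) *
      (1 + 2 * ∑ k ∈ Finset.Ico 1 n, Real.cos (k*θ) + Real.cos (n*θ)) := by
  induction n with
  | zero => omega
  | succ m ih =>
    rcases Nat.eq_or_lt_of_le hn with h1 | h1
    · simp [← h1]
      push_cast
      linear_combination Real.sin_sq_add_cos_sq θ
    · have hm : 1 ≤ m := by omega
      have ihm := ih hm
      rw [Finset.sum_Ico_succ_top hm]
      have e1 : ((m+1 : ℕ) : ℝ) * θ = m*θ + θ := by push_cast; ring
      push_cast
      push_cast at e1 ihm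
      rw [e1, Real.sin_add, Real.cos_add]
      linear_combination ihm + Real.cos (↑m*θ) * Real.sin_sq_add_cos_sq θ

lemma lkc_int_cos (k : ℝ) (hk : k ≠ 0) (a b : ℝ) :
    ∫ x in a..b, Real.cos (k*x) = (Real.sin (k*b) - Real.sin (k*a))/k := by
  have h : ∀ x ∈ Set.uIcc a b, HasDerivAt (fun x => Real.sin (k*x)/k) (Real.cos (k*x)) x := by
    intro x _
    have h1 : HasDerivAt (fun x : ℝ => k * x) k x := by
      simpa using (hasDerivAt_id x).const_mul k
    have h2 := (Real.hasDerivAt_sin (k*x)).comp x h1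
    have h3 := h2.div_const k
    refine h3.congr_deriv ?_
    field_simp
  have := integral_eq_sub_of_hasDerivAt h
    ((Real.continuous_cos.comp (continuous_const.mul continuous_id)).intervalIntegrable a b)
  rw [this]; ring

lemma lkc_log_int_pi : IntervalIntegrable Real.log volume 0 π := by
  refine lkc_log_int.trans ?_
  apply ContinuousOn.intervalIntegrable
  apply Real.continuousOn_log.mono
  intro x hx hx0
  rw [Set.uIcc_of_le (by linarith [Real.pi_gt_three] : (1:ℝ) ≤ π)] at hx
  simp only [Set.mem_singleton_iff] at hx0
  rw [hx0] at hx
  linarith [hx.1]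

lemma lkcg_ii_0pi : IntervalIntegrable lkcg volume 0 π := by
  have hdom : IntervalIntegrable (fun θ => 2 * |Real.log θ| + 2 * Real.log 2) volume 0 π :=
    ((lkc_log_int_pi.abs.const_mul 2).add (intervalIntegrable_const))
  refine hdom.mono_fun (lkcg_meas.aestronglyMeasurable) ?_
  have hπ := Real.pi_pos
  rw [Set.uIoc_of_le hπ.le]
  filter_upwards [ae_restrict_mem measurableSet_Ioc] with θ hθ
  rw [Real.norm_eq_abs, Real.norm_eq_abs]
  refine (lkcg_bound hθ.1 hθ.2).trans (le_abs_self _)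

lemma lkcg_ii_big : IntervalIntegrable lkcg volume (-(3*π)) (3*π) := by
  have hπ := Real.pi_pos
  have hneg : IntervalIntegrable lkcg volume (-π) 0 := by
    have h1 : IntervalIntegrable (fun x => lkcg (-x)) volume 0 π := by
      simpa only [lkcg_even] using lkcg_ii_0pi
    have := (IntervalIntegrable.iff_comp_neg (f := fun x => lkcg (-x)) (by simp)).mp h1
    simpa only [neg_neg, neg_zero] using this.symm
  have hmid : IntervalIntegrable lkcg volume (-π) π := hneg.trans lkcg_ii_0pi
  have hright : IntervalIntegrable lkcg volume π (3*π) := by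
    have h1 := hmid.comp_sub_right (2*π)
    have h2 : (fun x => lkcg (x - 2*π)) = lkcg := funext fun x => lkcg_periodic.sub_eq x
    rw [h2] at h1
    have : -π + 2*π = π := by ring
    rw [this] at h1
    have : π + 2*π = 3*π := by ring
    rwa [this] at h1
  have hleft : IntervalIntegrable lkcg volume (-(3*π)) (-π) := by
    have h1 := hmid.comp_add_right (2*π)
    have h2 : (fun x => lkcg (x + 2*π)) = lkcg := funext fun x => lkcg_periodic x
    rw [h2] at h1
    have : -π - 2*π = -(3*π) := by ring
    rw [this] at h1
    have : π - 2*π = -π := by ring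
    rwa [this] at h1
  exact (hleft.trans hmid).trans hright

lemma lkcg_ii {a b : ℝ} (ha : a ∈ Set.Icc (-(2*π)) (2*π)) (hb : b ∈ Set.Icc (-(2*π)) (2*π)) :
    IntervalIntegrable lkcg volume a b := by
  have hπ := Real.pi_pos
  refine lkcg_ii_big.mono_set ?_
  have h33 : Set.uIcc (-(3*π)) (3*π) = Set.Icc (-(3*π)) (3*π) := Set.uIcc_of_le (by linarith)
  rw [h33]
  refine Set.uIcc_subset_Icc ?_ ?_ <;> constructor <;> [linarith [ha.1]; linarith [ha.2]; linarith [hb.1]; linarith [hb.2]]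

lemma lkc_cos_lt_one {x : ℝ} (h0 : 0 < x) (h1 : x ≤ π) : Real.cos x < 1 := by
  have := Real.cos_lt_cos_of_nonneg_of_le_pi (le_refl 0) h1 h0
  simpa using this

lemma lkc_ibp (n : ℕ) (hn : 1 ≤ n) {ε : ℝ} (hε : 0 < ε) (hεπ : ε ≤ π) :
    ∫ θ in ε..π, lkcg θ * Real.cos (n*θ) =
      - lkcg ε * Real.sin (n*ε) / n
      - (1/n) * ((π - ε) - 2 * ∑ k ∈ Finset.Ico 1 n, Real.sin (k*ε)/k - Real.sin (n*ε)/n) := by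
  have hπ := Real.pi_pos
  have hn0 : (n:ℝ) ≠ 0 := Nat.cast_ne_zero.mpr (by omega)
  have huIcc : Set.uIcc ε π = Set.Icc ε π := Set.uIcc_of_le hεπ
  have hpos : ∀ x ∈ Set.Icc ε π, 0 < 2 - 2 * Real.cos x := by
    intro x hx
    have := lkc_cos_lt_one (lt_of_lt_of_le hε hx.1) hx.2
    linarith
  -- derivative of lkcg
  have hu : ∀ x ∈ Set.uIcc ε π, HasDerivAt lkcg (2 * Real.sin x / (2 - 2 * Real.cos x)) x := by
    intro x hx
    rw [huIcc] at hx
    have hA := hpos x hx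
    have hinner : HasDerivAt (fun x : ℝ => 2 - 2 * Real.cos x) (2 * Real.sin x) x := by
      simpa using ((Real.hasDerivAt_cos x).const_mul 2).const_sub 2
    have := (Real.hasDerivAt_log (ne_of_gt hA)).comp x hinner
    refine this.congr_deriv ?_
    field_simp
  have hv : ∀ x ∈ Set.uIcc ε π, HasDerivAt (fun θ => Real.sin (n*θ)/n) (Real.cos (n*x)) x := by
    intro x _
    have h1 : HasDerivAt (fun x : ℝ => (n:ℝ) * x) (n:ℝ) x := by
      simpa using (hasDerivAt_id x).const_mul (n:ℝ)
    have h2 := ((Real.hasDerivAt_sin ((n:ℝ)*x)).comp x h1).div_const (n:ℝ)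
    refine h2.congr_deriv ?_
    field_simp
  have hu'cont : ContinuousOn (fun x => 2 * Real.sin x / (2 - 2 * Real.cos x)) (Set.uIcc ε π) := by
    rw [huIcc]
    apply ContinuousOn.div
    · fun_prop
    · fun_prop
    · exact fun x hx => ne_of_gt (hpos x hx)
  have hu'int : IntervalIntegrable (fun x => 2 * Real.sin x / (2 - 2 * Real.cos x)) volume ε π :=
    hu'cont.intervalIntegrable
  have hv'int : IntervalIntegrable (fun x => Real.cos ((n:ℝ)*x)) volume ε π := by
    apply Continuous.intervalIntegrable; fun_prop
  have hibp := integral_mul_deriv_eq_deriv_mul hu hv hu'int hv'int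
  rw [hibp]
  have hsinpi : Real.sin ((n:ℝ)*π) = 0 := Real.sin_nat_mul_pi n
  rw [hsinpi]
  -- compute the remaining integral
  have hcong : ∫ x in ε..π, (2 * Real.sin x / (2 - 2 * Real.cos x)) * (Real.sin (n*x)/n)
      = ∫ x in ε..π, (1/n) * (1 + 2 * ∑ k ∈ Finset.Ico 1 n, Real.cos (k*x) + Real.cos (n*x)) := by
    apply integral_congr
    intro x hx
    rw [huIcc] at hx
    have hA := hpos x hx
    have ht := lkc_trig n hn x
    have hA' : 1 - Real.cos x ≠ 0 := by linarith
    field_simp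
    rw [ht]; simp only [mul_comm]
  rw [hcong]
  rw [intervalIntegral.integral_const_mul]
  have hsum : ∫ x in ε..π, (1 + 2 * ∑ k ∈ Finset.Ico 1 n, Real.cos (k*x) + Real.cos (n*x))
      = (π - ε) + 2 * ∑ k ∈ Finset.Ico 1 n, (0 - Real.sin (k*ε))/k + (0 - Real.sin (n*ε))/n := by
    have hcsum : Continuous fun x : ℝ => 2 * ∑ k ∈ Finset.Ico 1 n, Real.cos ((k:ℝ)*x) :=
      continuous_const.mul (continuous_finset_sum _ (fun k _ => by fun_prop))
    have hccos : Continuous fun x : ℝ => Real.cos ((n:ℝ)*x) := by fun_prop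
    have hcone : Continuous fun _ : ℝ => (1:ℝ) := continuous_const
    rw [intervalIntegral.integral_add (f := fun x => 1 + 2 * ∑ k ∈ Finset.Ico 1 n, Real.cos ((k:ℝ)*x)) ((hcone.add hcsum).intervalIntegrable _ _)
        (hccos.intervalIntegrable _ _),
      intervalIntegral.integral_add (hcone.intervalIntegrable _ _)
        (hcsum.intervalIntegrable _ _)]
    · rw [intervalIntegral.integral_const]
      rw [intervalIntegral.integral_const_mul]
      rw [intervalIntegral.integral_finset_sum]
      · rw [lkc_int_cos (n:ℝ) hn0, Real.sin_nat_mul_pi]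
        have : ∀ k ∈ Finset.Ico 1 n, (∫ x in ε..π, Real.cos ((k:ℝ)*x)) = (0 - Real.sin (k*ε))/k := by
          intro k hk
          have hk1 : 1 ≤ k := (Finset.mem_Ico.mp hk).1
          have hk0 : (k:ℝ) ≠ 0 := Nat.cast_ne_zero.mpr (by omega)
          rw [lkc_int_cos (k:ℝ) hk0, Real.sin_nat_mul_pi]
        rw [Finset.sum_congr rfl this]
        simp
      · intro k hk
        apply Continuous.intervalIntegrable; fun_prop
  rw [hsum]
  simp only [zero_sub, neg_div, Finset.sum_neg_distrib]
  field_simp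
  ring

lemma lkcJ (n : ℕ) (hn : 1 ≤ n) :
    ∫ θ in (0:ℝ)..π, lkcg θ * Real.cos (n*θ) = -π/n := by
  have hπ := Real.pi_pos
  have hn0 : (0:ℝ) < (n:ℝ) := by exact_mod_cast Nat.pos_of_ne_zero (by omega)
  set G : ℝ → ℝ := fun θ => lkcg θ * Real.cos (n*θ) with hG
  have hGint : IntervalIntegrable G volume 0 π :=
    lkcg_ii_0pi.mul_continuousOn (Continuous.continuousOn (by fun_prop))
  -- left side tendsto
  have hLcont : ContinuousOn (fun x => ∫ t in x..π, G t) (Set.uIcc 0 π) :=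
    continuousOn_primitive_interval_left (by rwa [intervalIntegrable_iff, uIoc_of_le hπ.le,
      ← integrableOn_Icc_iff_integrableOn_Ioc, ← uIcc_of_le hπ.le] at hGint)
  have hL : Tendsto (fun ε => ∫ t in ε..π, G t) (𝓝[>] (0:ℝ)) (𝓝 (∫ t in (0:ℝ)..π, G t)) := by
    have h0mem : (0:ℝ) ∈ Set.uIcc 0 π := Set.left_mem_uIcc
    have := (hLcont 0 h0mem).tendsto
    refine this.mono_left ?_
    rw [← nhdsWithin_Ioo_eq_nhdsGT hπ]
    apply nhdsWithin_mono
    rw [Set.uIcc_of_le hπ.le]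
    exact Set.Ioo_subset_Icc_self.trans (by norm_num)
  -- right side tendsto
  have hT1 : Tendsto (fun ε : ℝ => lkcg ε * Real.sin (n*ε)) (𝓝[>] (0:ℝ)) (𝓝 0) := by
    apply squeeze_zero_norm' (a := fun ε => -2*(n:ℝ)*(Real.log ε * ε) + 2*Real.log 2*(n:ℝ)*ε)
    · filter_upwards [Ioo_mem_nhdsGT_of_mem (Set.left_mem_Ico.mpr
        (lt_min one_pos hπ))] with ε hε
      have hε0 : 0 < ε := hε.1
      have hε1 : ε < 1 := lt_of_lt_of_le hε.2 (min_le_left _ _)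
      have hεπ : ε ≤ π := le_of_lt (lt_of_lt_of_le hε.2 (min_le_right _ _))
      have hb := lkcg_bound hε0 hεπ
      have hsin : |Real.sin (n*ε)| ≤ (n:ℝ)*ε :=
        (Real.abs_sin_le_abs (x := (n:ℝ)*ε)).trans_eq (abs_of_nonneg (by positivity))
      have hlogneg : |Real.log ε| = -Real.log ε := by
        rw [abs_of_nonpos (Real.log_nonpos hε0.le hε1.le)]
      rw [Real.norm_eq_abs, abs_mul]
      calc |lkcg ε| * |Real.sin (n*ε)| ≤ (2*|Real.log ε| + 2*Real.log 2) * ((n:ℝ)*ε) := by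
            apply mul_le_mul hb hsin (abs_nonneg _)
            have h1 := abs_nonneg (Real.log ε)
            have h2 : (0:ℝ) ≤ Real.log 2 := Real.log_nonneg (by norm_num)
            linarith
        _ = -2*(n:ℝ)*(Real.log ε * ε) + 2*Real.log 2*(n:ℝ)*ε := by rw [hlogneg]; ring
    · have h1 : Tendsto (fun ε : ℝ => Real.log ε * ε) (𝓝[>] (0:ℝ)) (𝓝 0) := by
        have := tendsto_log_mul_rpow_nhdsGT_zero (r := (1:ℝ)) one_pos
        refine this.congr' ?_
        filter_upwards [self_mem_nhdsWithin] with x hx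
        rw [Real.rpow_one]
      have h2 : Tendsto (fun ε : ℝ => ε) (𝓝[>] (0:ℝ)) (𝓝 0) :=
        tendsto_id.mono_left nhdsWithin_le_nhds
      have h3 := ((h1.const_mul (-2*(n:ℝ))).add (h2.const_mul (2*Real.log 2*(n:ℝ))))
      simp only [mul_zero, add_zero] at h3
      exact h3.congr (fun x => by ring)
  have hT2 : Tendsto (fun ε : ℝ => (1/(n:ℝ)) * ((π - ε)
      - 2 * ∑ k ∈ Finset.Ico 1 n, Real.sin (k*ε)/k - Real.sin (n*ε)/n)) (𝓝[>] (0:ℝ))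
      (𝓝 ((1/(n:ℝ)) * π)) := by
    have hc : Continuous (fun ε : ℝ => (1/(n:ℝ)) * ((π - ε)
        - 2 * ∑ k ∈ Finset.Ico 1 n, Real.sin (k*ε)/k - Real.sin (n*ε)/n)) := by
      apply continuous_const.mul
      apply Continuous.sub
      apply Continuous.sub
      · fun_prop
      · exact continuous_const.mul (continuous_finset_sum _ (fun k _ => by fun_prop))
      · fun_prop
    have := (hc.tendsto 0).mono_left (nhdsWithin_le_nhds (s := Set.Ioi (0:ℝ)))
    simpa using this
  have hR : Tendsto (fun ε : ℝ => - lkcg ε * Real.sin (n*ε) / n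
      - (1/(n:ℝ)) * ((π - ε) - 2 * ∑ k ∈ Finset.Ico 1 n, Real.sin (k*ε)/k - Real.sin (n*ε)/n))
      (𝓝[>] (0:ℝ)) (𝓝 (-π/n)) := by
    have h1 : Tendsto (fun ε : ℝ => - lkcg ε * Real.sin (n*ε) / n) (𝓝[>] (0:ℝ)) (𝓝 0) := by
      have := (hT1.neg).div_const (n:ℝ)
      simp only [neg_zero, zero_div] at this
      refine this.congr (fun x => by ring)
    have h2 := h1.sub hT2
    have he : (0:ℝ) - (1/(n:ℝ)) * π = -π/n := by field_simp; ring
    rw [he] at h2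
    exact h2
  -- combine
  have heq : (fun ε => ∫ t in ε..π, G t) =ᶠ[𝓝[>] (0:ℝ)]
      (fun ε : ℝ => - lkcg ε * Real.sin (n*ε) / n
      - (1/(n:ℝ)) * ((π - ε) - 2 * ∑ k ∈ Finset.Ico 1 n, Real.sin (k*ε)/k - Real.sin (n*ε)/n)) := by
    filter_upwards [Ioo_mem_nhdsGT_of_mem (Set.left_mem_Ico.mpr hπ)] with ε hε
    exact lkc_ibp n hn hε.1 hε.2.le
  exact tendsto_nhds_unique (hL.congr' heq) hR

lemma lkc_split {θ φ : ℝ} (h : Real.cos θ ≠ Real.cos φ) :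
    Real.log |Real.cos θ - Real.cos φ| =
      -Real.log 2 + (1/2) * lkcg (θ-φ) + (1/2) * lkcg (θ+φ) := by
  set c := Real.cos θ
  set c' := Real.cos φ
  have hA : 2 - 2*Real.cos (θ-φ) = 2 - 2*(c*c' + Real.sin θ * Real.sin φ) := by
    rw [Real.cos_sub]
  have hB : 2 - 2*Real.cos (θ+φ) = 2 - 2*(c*c' - Real.sin θ * Real.sin φ) := by
    rw [Real.cos_add]
  have hAB : (2 - 2*Real.cos (θ-φ)) * (2 - 2*Real.cos (θ+φ)) = (2*(c-c'))^2 := by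
    rw [hA, hB]
    have h1 := Real.sin_sq_add_cos_sq θ
    have h2 := Real.sin_sq_add_cos_sq φ
    nlinarith [h1, h2]
  have hA0 : 0 ≤ 2 - 2*Real.cos (θ-φ) := by nlinarith [Real.cos_le_one (θ-φ)]
  have hB0 : 0 ≤ 2 - 2*Real.cos (θ+φ) := by nlinarith [Real.cos_le_one (θ+φ)]
  have hcc : c - c' ≠ 0 := sub_ne_zero.mpr h
  have hABpos : 0 < (2 - 2*Real.cos (θ-φ)) * (2 - 2*Real.cos (θ+φ)) := by
    rw [hAB]; positivity
  have hApos : 0 < 2 - 2*Real.cos (θ-φ) := by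
    rcases hA0.lt_or_eq with h' | h'
    · exact h'
    · exfalso; rw [← h'] at hABpos; simp at hABpos
  have hBpos : 0 < 2 - 2*Real.cos (θ+φ) := by
    rcases hB0.lt_or_eq with h' | h'
    · exact h'
    · exfalso; rw [← h'] at hABpos; simp at hABpos
  have hlog : lkcg (θ-φ) + lkcg (θ+φ) = 2*Real.log 2 + 2*Real.log |c - c'| := by
    unfold lkcg
    rw [← Real.log_mul (ne_of_gt hApos) (ne_of_gt hBpos), hAB]
    rw [Real.log_pow]
    rw [Real.log_mul (by norm_num) hcc]
    rw [Real.log_abs]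
    push_cast; ring
  linarith [hlog]

lemma lkcK (n : ℕ) (hn : 1 ≤ n) {φ : ℝ} (hφ : φ ∈ Set.Ioo 0 π) :
    ∫ θ in (0:ℝ)..π, Real.log |Real.cos θ - Real.cos φ| * Real.cos (n*θ)
      = -(π/n) * Real.cos (n*φ) := by
  have hπ := Real.pi_pos
  have hn0 : (0:ℝ) < (n:ℝ) := by exact_mod_cast Nat.pos_of_ne_zero (by omega)
  obtain ⟨hφ0, hφπ⟩ := hφ
  -- integrabilities
  have hmem : ∀ x : ℝ, -(2*π) ≤ x → x ≤ 2*π → x ∈ Set.Icc (-(2*π)) (2*π) := fun x h1 h2 => ⟨h1, h2⟩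
  have h_sub : IntervalIntegrable (fun θ => lkcg (θ - φ)) volume 0 π := by
    have := (lkcg_ii (a := -φ) (b := π - φ)
      (hmem _ (by linarith) (by linarith)) (hmem _ (by linarith) (by linarith))).comp_sub_right φ
    simpa using this
  have h_add : IntervalIntegrable (fun θ => lkcg (θ + φ)) volume 0 π := by
    have := (lkcg_ii (a := φ) (b := π + φ)
      (hmem _ (by linarith) (by linarith)) (hmem _ (by linarith) (by linarith))).comp_add_right φ
    simpa using this
  have hcosc : Continuous (fun θ : ℝ => Real.cos (n*θ)) := by fun_prop
  have h_sub' : IntervalIntegrable (fun θ => lkcg (θ - φ) * Real.cos (n*θ)) volume 0 π :=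
    h_sub.mul_continuousOn hcosc.continuousOn
  have h_add' : IntervalIntegrable (fun θ => lkcg (θ + φ) * Real.cos (n*θ)) volume 0 π :=
    h_add.mul_continuousOn hcosc.continuousOn
  -- a.e. rewrite of the integrand
  have hae : ∫ θ in (0:ℝ)..π, Real.log |Real.cos θ - Real.cos φ| * Real.cos (n*θ)
      = ∫ θ in (0:ℝ)..π, (-Real.log 2 * Real.cos (n*θ)
          + (1/2) * (lkcg (θ-φ) * Real.cos (n*θ)) + (1/2) * (lkcg (θ+φ) * Real.cos (n*θ))) := by
    apply intervalIntegral.integral_congr_ae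
    have hane : ∀ᵐ x : ℝ ∂volume, x ≠ φ := by
      rw [MeasureTheory.ae_iff]
      have : {x : ℝ | ¬ x ≠ φ} = {φ} := by ext x; simp
      rw [this]
      exact measure_singleton φ
    filter_upwards [hane] with x hx hxmem
    rw [Set.uIoc_of_le hπ.le] at hxmem
    have hcosne : Real.cos x ≠ Real.cos φ := by
      intro hc
      exact hx (Real.injOn_cos ⟨hxmem.1.le, hxmem.2⟩ ⟨hφ0.le, hφπ.le⟩ hc)
    rw [lkc_split hcosne]; ring
  rw [hae]
  rw [intervalIntegral.integral_add (((hcosc.intervalIntegrable _ _).const_mul _).add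
      (h_sub'.const_mul _)) (h_add'.const_mul _),
    intervalIntegral.integral_add ((hcosc.intervalIntegrable _ _).const_mul _)
      (h_sub'.const_mul _),
    intervalIntegral.integral_const_mul, intervalIntegral.integral_const_mul,
    intervalIntegral.integral_const_mul]
  have hcos0 : ∫ θ in (0:ℝ)..π, Real.cos (n*θ) = 0 := by
    rw [lkc_int_cos (n:ℝ) (ne_of_gt hn0), Real.sin_nat_mul_pi]
    simp
  rw [hcos0]
  -- the shifted integrals
  set F : ℝ → ℝ := fun u => lkcg u * Real.cos (n*(u+φ)) with hF
  have hFii : ∀ a b : ℝ, a ∈ Set.Icc (-(2*π)) (2*π) → b ∈ Set.Icc (-(2*π)) (2*π) →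
      IntervalIntegrable F volume a b := fun a b ha hb =>
    (lkcg_ii ha hb).mul_continuousOn (Continuous.continuousOn (by fun_prop))
  have hE1 : ∫ θ in (0:ℝ)..π, lkcg (θ-φ) * Real.cos (n*θ) = ∫ u in (-φ)..(π-φ), F u := by
    have : ∀ θ : ℝ, lkcg (θ-φ) * Real.cos (n*θ) = F (θ - φ) := by
      intro θ; rw [hF]; simp [sub_add_cancel]
    simp_rw [this]
    rw [intervalIntegral.integral_comp_sub_right F φ]
    norm_num
  have hE2 : ∫ θ in (0:ℝ)..π, lkcg (θ+φ) * Real.cos (n*θ) = ∫ u in (-(π+φ))..(-φ), F u := by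
    have h1 : ∀ θ : ℝ, lkcg (θ+φ) * Real.cos (n*θ) = F (-(θ + φ)) := by
      intro θ
      show lkcg (θ+φ) * Real.cos (n*θ) = lkcg (-(θ+φ)) * Real.cos ((n:ℝ) * (-(θ+φ) + φ))
      rw [lkcg_even]
      have : (n:ℝ) * (-(θ+φ) + φ) = -((n:ℝ)*θ) := by ring
      rw [this, Real.cos_neg]
    simp_rw [h1]
    have h2 := intervalIntegral.integral_comp_neg (a := (0:ℝ)) (b := π) (fun x => F (x + φ))
    -- ∫ 0..π F(-(θ+φ)) : use comp_neg on fun x => F (x+φ)? directly: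
    -- F(-(θ+φ)) = (fun x => F (-(x+φ))) θ
    have h3 := intervalIntegral.integral_comp_add_right (a := (0:ℝ)) (b := π)
      (fun x => F (-x)) φ
    -- h3 : ∫ 0..π F (-(x+φ)) = ∫ φ..π+φ F (-x)
    rw [h3, show (0:ℝ)+φ = φ from zero_add φ]
    exact intervalIntegral.integral_comp_neg (a := φ) (b := π + φ) F
  rw [hE1, hE2]
  have hadj : (∫ u in (-(π+φ))..(-φ), F u) + (∫ u in (-φ)..(π-φ), F u)
      = ∫ u in (-(π+φ))..(π-φ), F u := by
    apply intervalIntegral.integral_add_adjacent_intervals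
    · exact hFii _ _ (hmem _ (by linarith) (by linarith)) (hmem _ (by linarith) (by linarith))
    · exact hFii _ _ (hmem _ (by linarith) (by linarith)) (hmem _ (by linarith) (by linarith))
  have hper : Function.Periodic F (2*π) := by
    intro u
    rw [hF]
    simp only
    rw [lkcg_periodic u]
    have : (n:ℝ) * (u + 2*π + φ) = (n:ℝ)*(u+φ) + (n:ℕ) * (2*π) := by push_cast; ring
    rw [this, Real.cos_add_nat_mul_two_pi]
  have hshift : ∫ u in (-(π+φ))..(π-φ), F u = ∫ u in (-π)..π, F u := by
    have := hper.intervalIntegral_add_eq (-(π+φ)) (-π)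
    have e1 : -(π+φ) + 2*π = π - φ := by ring
    have e2 : -π + 2*π = π := by ring
    rw [e1, e2] at this
    exact this
  -- evaluate ∫_{-π}^{π} F
  have hFsplit : ∀ u : ℝ, F u = (lkcg u * Real.cos (n*u)) * Real.cos (n*φ)
      - (lkcg u * Real.sin (n*u)) * Real.sin (n*φ) := by
    intro u
    rw [hF]
    simp only
    have : (n:ℝ) * (u + φ) = (n:ℝ)*u + (n:ℝ)*φ := by ring
    rw [this, Real.cos_add]
    ring
  have hiicos : ∀ a b : ℝ, a ∈ Set.Icc (-(2*π)) (2*π) → b ∈ Set.Icc (-(2*π)) (2*π) →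
      IntervalIntegrable (fun u => lkcg u * Real.cos (n*u)) volume a b := fun a b ha hb =>
    (lkcg_ii ha hb).mul_continuousOn (Continuous.continuousOn (by fun_prop))
  have hiisin : ∀ a b : ℝ, a ∈ Set.Icc (-(2*π)) (2*π) → b ∈ Set.Icc (-(2*π)) (2*π) →
      IntervalIntegrable (fun u => lkcg u * Real.sin (n*u)) volume a b := fun a b ha hb =>
    (lkcg_ii ha hb).mul_continuousOn (Continuous.continuousOn (by fun_prop))
  have hsin0 : ∫ u in (-π)..π, lkcg u * Real.sin (n*u) = 0 := by
    have hsplit : (∫ u in (-π)..(0:ℝ), lkcg u * Real.sin (n*u))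
        + (∫ u in (0:ℝ)..π, lkcg u * Real.sin (n*u)) = ∫ u in (-π)..π, lkcg u * Real.sin (n*u) :=
      intervalIntegral.integral_add_adjacent_intervals
        (hiisin _ _ (hmem _ (by linarith) (by linarith)) (hmem _ (by linarith) (by linarith)))
        (hiisin _ _ (hmem _ (by linarith) (by linarith)) (hmem _ (by linarith) (by linarith)))
    have hneg : ∫ u in (-π)..(0:ℝ), lkcg u * Real.sin (n*u)
        = - ∫ u in (0:ℝ)..π, lkcg u * Real.sin (n*u) := by
      have h1 := intervalIntegral.integral_comp_neg (a := (0:ℝ)) (b := π)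
        (fun u => lkcg u * Real.sin (n*u))
      simp only [neg_zero] at h1
      rw [← h1]
      rw [← intervalIntegral.integral_neg]
      apply intervalIntegral.integral_congr
      intro x _
      show lkcg (-x) * Real.sin ((n:ℝ) * -x) = -(lkcg x * Real.sin ((n:ℝ)*x))
      rw [lkcg_even]
      have : (n:ℝ) * (-x) = -((n:ℝ)*x) := by ring
      rw [this, Real.sin_neg]
      ring
    linarith [hsplit, hneg]
  have hcos2 : ∫ u in (-π)..π, lkcg u * Real.cos (n*u) = 2 * (-π/n) := by
    have hsplit : (∫ u in (-π)..(0:ℝ), lkcg u * Real.cos (n*u))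
        + (∫ u in (0:ℝ)..π, lkcg u * Real.cos (n*u)) = ∫ u in (-π)..π, lkcg u * Real.cos (n*u) :=
      intervalIntegral.integral_add_adjacent_intervals
        (hiicos _ _ (hmem _ (by linarith) (by linarith)) (hmem _ (by linarith) (by linarith)))
        (hiicos _ _ (hmem _ (by linarith) (by linarith)) (hmem _ (by linarith) (by linarith)))
    have hneg : ∫ u in (-π)..(0:ℝ), lkcg u * Real.cos (n*u)
        = ∫ u in (0:ℝ)..π, lkcg u * Real.cos (n*u) := by
      have h1 := intervalIntegral.integral_comp_neg (a := (0:ℝ)) (b := π)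
        (fun u => lkcg u * Real.cos (n*u))
      simp only [neg_zero] at h1
      rw [← h1]
      apply intervalIntegral.integral_congr
      intro x _
      show lkcg (-x) * Real.cos ((n:ℝ) * -x) = lkcg x * Real.cos ((n:ℝ)*x)
      rw [lkcg_even]
      have : (n:ℝ) * (-x) = -((n:ℝ)*x) := by ring
      rw [this, Real.cos_neg]
    rw [← hsplit, hneg, lkcJ n hn]
    ring
  have hFval : ∫ u in (-π)..π, F u = Real.cos (n*φ) * (2 * (-π/n)) := by
    have : ∫ u in (-π)..π, F u = ∫ u in (-π)..π, ((lkcg u * Real.cos (n*u)) * Real.cos (n*φ)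
        - (lkcg u * Real.sin (n*u)) * Real.sin (n*φ)) := by
      apply intervalIntegral.integral_congr
      intro x _; exact hFsplit x
    rw [this]
    rw [intervalIntegral.integral_sub
      ((hiicos _ _ (hmem _ (by linarith) (by linarith)) (hmem _ (by linarith) (by linarith))).mul_const _)
      ((hiisin _ _ (hmem _ (by linarith) (by linarith)) (hmem _ (by linarith) (by linarith))).mul_const _)]
    rw [intervalIntegral.integral_mul_const, intervalIntegral.integral_mul_const]
    rw [hsin0, hcos2]
    ring
  linear_combination (1/2)*hadj + (1/2)*hshift + (1/2)*hFval

lemma lkc_img : Real.cos '' Set.Ioo 0 π = Set.Ioo (-1:ℝ) 1 := by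
  ext y
  constructor
  · rintro ⟨x, hx, rfl⟩
    constructor
    · have := Real.strictAntiOn_cos (Set.mem_Icc.mpr ⟨hx.1.le, hx.2.le⟩)
        (Set.mem_Icc.mpr ⟨Real.pi_pos.le, le_refl π⟩) hx.2
      rwa [Real.cos_pi] at this
    · have := Real.strictAntiOn_cos (Set.mem_Icc.mpr ⟨le_refl 0, Real.pi_pos.le⟩)
        (Set.mem_Icc.mpr ⟨hx.1.le, hx.2.le⟩) hx.1
      rwa [Real.cos_zero] at this
  · rintro ⟨h1, h2⟩
    refine ⟨Real.arccos y, ⟨Real.arccos_pos.mpr h2, ?_⟩, Real.cos_arccos h1.le h2.le⟩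
    rcases (Real.arccos_le_pi y).lt_or_eq with h | h
    · exact h
    · exfalso
      have := Real.cos_arccos h1.le h2.le
      rw [h, Real.cos_pi] at this
      linarith

/-- `∫_{-1}^1 log|s-t| (1-t²)^{-1/2} T_n(t) dt = -(π/n) T_n(s)` for `n ≥ 1`, `s ∈ (-1,1)`. -/
theorem log_kernel_chebyshev (n : ℕ) (hn : 1 ≤ n) (s : ℝ) (hs : s ∈ Set.Ioo (-1:ℝ) 1) :
    (∫ t in (-1:ℝ)..1,
        Real.log |s - t| * (1 - t ^ 2) ^ (-(1/2) : ℝ) * (Polynomial.Chebyshev.T ℝ n).eval t) =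
      -(Real.pi / n) * (Polynomial.Chebyshev.T ℝ n).eval s := by
  have hπ := Real.pi_pos
  obtain ⟨hs1, hs2⟩ := hs
  set φ := Real.arccos s with hφdef
  have hφ : φ ∈ Set.Ioo 0 π := by
    constructor
    · exact Real.arccos_pos.mpr hs2
    · rcases (Real.arccos_le_pi s).lt_or_eq with h | h
      · exact h
      · exfalso
        have := Real.cos_arccos hs1.le hs2.le
        rw [h, Real.cos_pi] at this
        linarith
  have hcosφ : Real.cos φ = s := Real.cos_arccos hs1.le hs2.le
  set f : ℝ → ℝ := fun t =>
    Real.log |s - t| * (1 - t ^ 2) ^ (-(1/2) : ℝ) * (Polynomial.Chebyshev.T ℝ n).eval t with hf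
  have hderiv : ∀ x ∈ Set.Ioo (0:ℝ) π, HasDerivWithinAt Real.cos (-Real.sin x) (Set.Ioo 0 π) x :=
    fun x _ => (Real.hasDerivAt_cos x).hasDerivWithinAt
  have hinj : Set.InjOn Real.cos (Set.Ioo 0 π) :=
    Real.injOn_cos.mono Set.Ioo_subset_Icc_self
  have hchg := MeasureTheory.integral_image_eq_integral_abs_deriv_smul
    measurableSet_Ioo hderiv hinj f
  rw [lkc_img] at hchg
  have h1 : (∫ t in (-1:ℝ)..1, f t) = ∫ t in Set.Ioo (-1:ℝ) 1, f t := by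
    rw [intervalIntegral.integral_of_le (by norm_num : (-1:ℝ) ≤ 1),
      MeasureTheory.integral_Ioc_eq_integral_Ioo]
  have h2 : ∫ x in Set.Ioo (0:ℝ) π, |(-Real.sin x)| • f (Real.cos x)
      = ∫ x in Set.Ioo (0:ℝ) π, Real.log |Real.cos x - Real.cos φ| * Real.cos (n*x) := by
    apply MeasureTheory.setIntegral_congr_fun measurableSet_Ioo
    intro x hx
    have hsin : 0 < Real.sin x := Real.sin_pos_of_pos_of_lt_pi hx.1 hx.2
    have habs : |(-Real.sin x)| = Real.sin x := by
      rw [abs_neg, abs_of_pos hsin]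
    have hTx : (Polynomial.Chebyshev.T ℝ n).eval (Real.cos x) = Real.cos (n*x) := by
      have := Polynomial.Chebyshev.T_real_cos x (n:ℤ)
      push_cast at this ⊢
      convert this using 3
    have hpow : (1 - Real.cos x ^ 2) ^ (-(1/2) : ℝ) = (Real.sin x)⁻¹ := by
      have hsq : 1 - Real.cos x ^ 2 = Real.sin x ^ 2 := by
        have := Real.sin_sq_add_cos_sq x; linarith
      rw [hsq, ← Real.rpow_natCast (Real.sin x) 2, ← Real.rpow_mul hsin.le]
      norm_num [Real.rpow_neg_one]
    show |(-Real.sin x)| • f (Real.cos x) = Real.log |Real.cos x - Real.cos φ| * Real.cos (n*x)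
    rw [habs, hf]
    simp only [smul_eq_mul]
    rw [hTx, hpow]
    rw [abs_sub_comm s (Real.cos x), hcosφ]
    field_simp
  have h3 : ∫ x in Set.Ioo (0:ℝ) π, Real.log |Real.cos x - Real.cos φ| * Real.cos (n*x)
      = ∫ θ in (0:ℝ)..π, Real.log |Real.cos θ - Real.cos φ| * Real.cos (n*θ) := by
    rw [intervalIntegral.integral_of_le hπ.le, MeasureTheory.integral_Ioc_eq_integral_Ioo]
  have hT_s : (Polynomial.Chebyshev.T ℝ n).eval s = Real.cos (n*φ) := by
    rw [← hcosφ]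
    have := Polynomial.Chebyshev.T_real_cos φ (n:ℤ)
    push_cast at this ⊢
    convert this using 3
  rw [h1, hchg, h2, h3, lkcK n hn hφ, hT_s]
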